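/- Let α ∈ (1,∞]. Then there exists d ∈ ℕ such that the function g : (ℝ≥0)^d ∖ {0} → ℝ defined by g(x) = ‖x‖₁ · H_α(x/‖x‖₁), where ‖x‖₁ = ∑_i x_i, is not concave. Consequently, for α ∈ [0,∞], the function g is concave for every dimension d only if α ∈ [0,1]. -/

import Mathlib

open MeasureTheory
open scoped ENNReal

noncomputable section

/-- Base-2 logarithm. -/
def log2 (x : ℝ) : ℝ := Real.logb 2 x

/-- Base-2 exponential. -/
def exp2 (x : ℝ) : ℝ := (2 : ℝ) ^ x

/-- Rényi entropy of order `α ∈ [0,∞]` of a vector `p` on a finite set. -/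
def renyi {X : Type*} [Fintype X] (α : ℝ≥0∞) (p : X → ℝ) : ℝ :=
  if α = 0 then log2 (Nat.card {x : X // 0 < p x})
  else if α = 1 then -∑ x, p x * log2 (p x)
  else if α = ⊤ then -log2 (⨆ x, p x)
  else (1 - α.toReal)⁻¹ * log2 (∑ x, p x ^ α.toReal)

/-- A probability vector on a finite set. -/
def IsProbVec {X : Type*} [Fintype X] (p : X → ℝ) : Prop :=
  (∀ x, 0 ≤ p x) ∧ ∑ x, p x = 1

/-- A doubly stochastic matrix. -/
def DoublyStochastic {X : Type*} [Fintype X] (S : Matrix X X ℝ) : Prop :=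
  (∀ i j, 0 ≤ S i j) ∧ (∀ i, ∑ j, S i j = 1) ∧ (∀ j, ∑ i, S i j = 1)

/-- `Q` is obtained from `P` by a conditionally mixing channel. -/
def CondMixed {X Y Y' : Type*} [Fintype X] [Fintype Y] [Fintype Y']
    (P : Matrix X Y ℝ) (Q : Matrix X Y' ℝ) : Prop :=
  ∃ (k : ℕ) (S : Fin k → Matrix X X ℝ) (D : Fin k → Matrix Y Y' ℝ),
    (∀ i, DoublyStochastic (S i)) ∧
    (∀ i a b, 0 ≤ D i a b) ∧
    (∀ a, ∑ b, ∑ i, D i a b = 1) ∧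
    Q = ∑ i, S i * P * D i

/-- A joint probability distribution on finite alphabets, viewed as a matrix. -/
def IsJointProb {X Y : Type*} [Fintype X] [Fintype Y] (P : Matrix X Y ℝ) : Prop :=
  (∀ x y, 0 ≤ P x y) ∧ ∑ x, ∑ y, P x y = 1

/-- Marginal on the conditioning system: the `y`-th column sum. -/
def margY {X Y : Type*} [Fintype X] (P : Matrix X Y ℝ) (y : Y) : ℝ := ∑ x, P x y

/-- The conditioned distribution (normalized `y`-th column). -/
def condX {X Y : Type*} [Fintype X] (P : Matrix X Y ℝ) (y : Y) : X → ℝ :=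
  fun x => P x y / margY P y

/-- The conditional entropy `H_{t,τ}`. -/
def Hbulk {X Y : Type*} [Fintype X] [Fintype Y] (t : ℝ) (τ : Measure ℝ≥0∞)
    (P : Matrix X Y ℝ) : ℝ :=
  t⁻¹ * log2 (∑ y ∈ Finset.univ.filter (fun y => 0 < margY P y),
    margY P y * exp2 (t * ∫ α, renyi α (condX P y) ∂τ))

/-- The conditional entropy `H_{0,α}`. -/
def HzeroA {X Y : Type*} [Fintype X] [Fintype Y] (α : ℝ≥0∞) (P : Matrix X Y ℝ) : ℝ :=
  ∑ y ∈ Finset.univ.filter (fun y => 0 < margY P y), margY P y * renyi α (condX P y)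

/-- The conditional entropy `H_{-∞,τ}`. -/
def HnegInf {X Y : Type*} [Fintype X] [Fintype Y] (τ : Measure ℝ≥0∞)
    (P : Matrix X Y ℝ) : ℝ :=
  sInf ((fun y => ∫ α, renyi α (condX P y) ∂τ) '' {y | 0 < margY P y})

/-- The conditional entropy `H_{+∞,0}`. -/
def HposInf {X Y : Type*} [Fintype X] [Fintype Y] (P : Matrix X Y ℝ) : ℝ :=
  sSup ((fun y => renyi 0 (condX P y)) '' {y | 0 < margY P y})

/-- The parameter set `𝒟_bulk`. -/
def Dbulk : Set (ℝ × Measure ℝ≥0∞) :=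
  {p | p.1 ≠ 0 ∧ IsProbabilityMeasure p.2 ∧
    ∀ (d n n' : ℕ) (P : Matrix (Fin d) (Fin n) ℝ) (Q : Matrix (Fin d) (Fin n') ℝ),
      IsJointProb P → CondMixed P Q → Hbulk p.1 p.2 P ≤ Hbulk p.1 p.2 Q}

/-- The parameter set `𝒟_{-∞}`. -/
def DnegInf : Set (Measure ℝ≥0∞) :=
  {τ | IsProbabilityMeasure τ ∧
    ∀ (d n n' : ℕ) (P : Matrix (Fin d) (Fin n) ℝ) (Q : Matrix (Fin d) (Fin n') ℝ),
      IsJointProb P → CondMixed P Q → HnegInf τ P ≤ HnegInf τ Q}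

/-- `P'` is obtained from `P` by relabeling (injections) and embedding, with zeros elsewhere. -/
def Embeds {X Y X' Y' : Type*} [Fintype X] [Fintype Y] [Fintype X'] [Fintype Y']
    (P : Matrix X Y ℝ) (P' : Matrix X' Y' ℝ) : Prop :=
  ∃ (f : X ↪ X') (g : Y ↪ Y'),
    (∀ x y, P' (f x) (g y) = P x y) ∧
    (∀ x' y', P' x' y' ≠ 0 → (∃ x, f x = x') ∧ (∃ y, g y = y'))

/-- Conditional majorization: after a common embedding, a conditionally mixing channel maps
(the embedding of) `P` to (the embedding of) `Q`. -/
def CondMajorizes {X Y X' Y' : Type*} [Fintype X] [Fintype Y] [Fintype X'] [Fintype Y']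
    (P : Matrix X Y ℝ) (Q : Matrix X' Y' ℝ) : Prop :=
  ∃ (m n n' : ℕ) (P' : Matrix (Fin m) (Fin n) ℝ) (Q' : Matrix (Fin m) (Fin n') ℝ),
    Embeds P P' ∧ Embeds Q Q' ∧ CondMixed P' Q'

/-- Kronecker product of matrices. -/
def kron {X Y X' Y' : Type*} (P : Matrix X Y ℝ) (Q : Matrix X' Y' ℝ) :
    Matrix (X × X') (Y × Y') ℝ :=
  Matrix.of fun x y => P x.1 y.1 * Q x.2 y.2

/-- `n`-fold Kronecker power of a matrix. -/
def kronPow {X Y : Type*} (P : Matrix X Y ℝ) (n : ℕ) :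
    Matrix (Fin n → X) (Fin n → Y) ℝ :=
  Matrix.of fun x y => ∏ i, P (x i) (y i)

/-- Sum of all entries of a matrix. -/
def totalMass {X Y : Type*} [Fintype X] [Fintype Y] (P : Matrix X Y ℝ) : ℝ :=
  ∑ x, ∑ y, P x y

/-- `α/(1-α)`, with the convention that it equals `-1` at `α = ∞`. -/
def aRatio (α : ℝ≥0∞) : ℝ := if α = ⊤ then -1 else α.toReal / (1 - α.toReal)

/-- `α/(α-1)`, with the convention that it equals `1` at `α = ∞`. -/
def aRatio' (α : ℝ≥0∞) : ℝ := if α = ⊤ then 1 else α.toReal / (α.toReal - 1)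

/-- Rényi relative entropy `D_α(p‖r)`. -/
def relRenyi {X : Type*} [Fintype X] (α : ℝ≥0∞) (p r : X → ℝ) : ℝ :=
  if α = 1 then ∑ x, p x * log2 (p x / r x)
  else if α = ⊤ then log2 (⨆ x, p x / r x)
  else (α.toReal - 1)⁻¹ * log2 (∑ x, p x ^ α.toReal * r x ^ (1 - α.toReal))

/-- The quantity `I_{t,τ}(P‖R)`. -/
def Ibulk {X Y : Type*} [Fintype X] [Fintype Y] (t : ℝ) (τ : Measure ℝ≥0∞)
    (P : Matrix X Y ℝ) (R : X → ℝ) : ℝ :=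
  -t⁻¹ * log2 (∑ y ∈ Finset.univ.filter (fun y => 0 < margY P y),
    margY P y * exp2 (-t * ∫ α, relRenyi α (condX P y) R ∂τ))

/-- The quantity `I_{-∞,τ}(P‖R)`. -/
def InegInf {X Y : Type*} [Fintype X] [Fintype Y] (τ : Measure ℝ≥0∞)
    (P : Matrix X Y ℝ) (R : X → ℝ) : ℝ :=
  sSup ((fun y => ∫ α, relRenyi α (condX P y) R ∂τ) '' {y | 0 < margY P y})

/-- A conditioned `R`-preserving channel maps `P` to `Q`. -/
def CondPreserving {X Y Y' : Type*} [Fintype X] [Fintype Y] [Fintype Y'] (R : X → ℝ)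
    (P : Matrix X Y ℝ) (Q : Matrix X Y' ℝ) : Prop :=
  ∃ (k : ℕ) (G : Fin k → Matrix X X ℝ) (D : Fin k → Matrix Y Y' ℝ),
    (∀ i a b, 0 ≤ G i a b) ∧
    (∀ i b, ∑ a, G i a b = 1) ∧
    (∀ i, (G i).mulVec R = R) ∧
    (∀ i a b, 0 ≤ D i a b) ∧
    (∀ a, ∑ b, ∑ i, D i a b = 1) ∧
    Q = ∑ i, G i * P * D i

/-- Total variation distance between two matrices. -/
def tvDist {X Y : Type*} [Fintype X] [Fintype Y] (P Q : Matrix X Y ℝ) : ℝ :=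
  (1 / 2) * ∑ x, ∑ y, |P x y - Q x y|

lemma sum_ite_fin (m : ℕ) (A B : ℝ) :
    ∑ i : Fin (m + 1), (if i = 0 then A else B) = A + m * B := by
  rw [Fin.sum_univ_succ]
  simp [Fin.succ_ne_zero, mul_comm]

lemma isup_ite_le (m : ℕ) (A B : ℝ) (hBA : B ≤ A) :
    (⨆ i : Fin (m + 1), (if i = 0 then A else B)) = A := by
  apply le_antisymm
  · exact ciSup_le fun i => by split_ifs <;> simp [hBA]
  · have := le_ciSup (f := fun i : Fin (m+1) => if i = 0 then A else B)
      (Set.Finite.bddAbove (Set.finite_range _)) 0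
    simpa using this

lemma isup_ite_ge (m : ℕ) (hm : m ≠ 0) (A B : ℝ) (hAB : A ≤ B) :
    (⨆ i : Fin (m + 1), (if i = 0 then A else B)) = B := by
  apply le_antisymm
  · exact ciSup_le fun i => by split_ifs <;> simp [hAB]
  · have h1 : (⟨1, by omega⟩ : Fin (m+1)) ≠ 0 := by
      simp [Fin.ext_iff]
    have := le_ciSup (f := fun i : Fin (m+1) => if i = 0 then A else B)
      (Set.Finite.bddAbove (Set.finite_range _)) ⟨1, by omega⟩
    simpa [h1] using this

lemma key_not_concave (γ : ℝ≥0∞) (hγ : 1 < γ) :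
    ∃ d : ℕ, ¬ ConcaveOn ℝ {x : Fin d → ℝ | (∀ i, 0 ≤ x i) ∧ x ≠ 0}
      (fun x => (∑ i, x i) * renyi γ (fun i => x i / ∑ j, x j)) := by
  have hγ0 : γ ≠ 0 := (zero_lt_one.trans hγ).ne'
  have hγ1 : γ ≠ 1 := hγ.ne'
  set k : ℕ := max 3 ⌈2 * γ.toReal / (γ.toReal - 1)⌉₊ with hk
  set m : ℕ := 2 ^ k with hm
  have hk3 : 3 ≤ k := le_max_left _ _
  have hm8 : 8 ≤ m := by
    calc (8:ℕ) = 2 ^ 3 := by norm_num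
    _ ≤ 2 ^ k := Nat.pow_le_pow_right (by norm_num) hk3
  have hmpos : (0:ℝ) < (m:ℝ) := by positivity
  have hmne : (m:ℝ) ≠ 0 := hmpos.ne'
  have hlogm : log2 (m:ℝ) = (k:ℝ) := by
    rw [hm, log2]
    push_cast
    rw [Real.logb_pow, Real.logb_self_eq_one (by norm_num)]
    ring
  refine ⟨m + 1, fun hcon => ?_⟩
  -- the two points
  set a : Fin (m+1) → ℝ := fun i => if i = 0 then 2 else 0 with hadef
  set b : Fin (m+1) → ℝ := fun i => if i = 0 then 0 else 2 / m with hbdef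
  have hamem : a ∈ {x : Fin (m+1) → ℝ | (∀ i, 0 ≤ x i) ∧ x ≠ 0} := by
    refine ⟨fun i => by by_cases h : i = 0 <;> simp [hadef, h], fun h => ?_⟩
    have := congrFun h 0
    simp [hadef] at this
  have hbmem : b ∈ {x : Fin (m+1) → ℝ | (∀ i, 0 ≤ x i) ∧ x ≠ 0} := by
    refine ⟨fun i => by by_cases h : i = 0 <;> simp [hbdef, h] <;> positivity, fun h => ?_⟩
    have h1 : (⟨1, by omega⟩ : Fin (m+1)) ≠ 0 := by simp [Fin.ext_iff]
    have := congrFun h ⟨1, by omega⟩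
    simp [hbdef, h1] at this
    exact hmne (by linarith)
  have H := hcon.2 hamem hbmem (by norm_num : (0:ℝ) ≤ 1/2) (by norm_num : (0:ℝ) ≤ 1/2)
    (by norm_num)
  -- sums
  have hsa : ∑ i, a i = 2 := by rw [hadef]; rw [sum_ite_fin]; ring
  have hsb : ∑ i, b i = 2 := by rw [hbdef]; rw [sum_ite_fin]; field_simp; ring
  have hmid : (1/2 : ℝ) • a + (1/2 : ℝ) • b = fun i => if i = 0 then (1:ℝ) else 1 / m := by
    funext i
    by_cases h : i = 0 <;> simp [hadef, hbdef, h] <;> ring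
  have hsmid : ∑ i : Fin (m+1), (if i = 0 then (1:ℝ) else 1 / m) = 2 := by
    rw [sum_ite_fin]; field_simp; ring
  -- normalized vectors
  have hna : (fun i => a i / ∑ j, a j) = fun i : Fin (m+1) => if i = 0 then (1:ℝ) else 0 := by
    rw [hsa]; funext i; by_cases h : i = 0 <;> simp [hadef, h]
  have hnb : (fun i => b i / ∑ j, b j) = fun i : Fin (m+1) => if i = 0 then (0:ℝ) else 1/m := by
    rw [hsb]; funext i; by_cases h : i = 0 <;> simp [hbdef, h] <;> ring
  -- renyi values
  have hRa : renyi γ (fun i : Fin (m+1) => if i = 0 then (1:ℝ) else 0) = 0 := by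
    rcases eq_or_ne γ ⊤ with ht | ht
    · rw [renyi, if_neg hγ0, if_neg hγ1, if_pos ht, isup_ite_le m 1 0 (by norm_num)]
      simp [log2]
    · have hg1 : 1 < γ.toReal := by
        rw [← ENNReal.toReal_one]
        exact (ENNReal.toReal_lt_toReal ENNReal.one_ne_top ht).mpr hγ
      have hgne : γ.toReal ≠ 0 := by linarith
      rw [renyi, if_neg hγ0, if_neg hγ1, if_neg ht]
      have : ∑ i : Fin (m+1), (if i = 0 then (1:ℝ) else 0) ^ γ.toReal = 1 := by
        have : ∀ i : Fin (m+1), (if i = 0 then (1:ℝ) else 0) ^ γ.toReal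
            = if i = 0 then (1:ℝ) else 0 := by
          intro i; by_cases h : i = 0 <;> simp [h, Real.zero_rpow hgne]
        rw [Finset.sum_congr rfl fun i _ => this i, sum_ite_fin]; ring
      rw [this]; simp [log2]
  have hRb : renyi γ (fun i : Fin (m+1) => if i = 0 then (0:ℝ) else 1/m) = k := by
    rcases eq_or_ne γ ⊤ with ht | ht
    · rw [renyi, if_neg hγ0, if_neg hγ1, if_pos ht,
        isup_ite_ge m (by omega) 0 (1/m) (by positivity)]
      rw [log2, one_div, Real.logb_inv, ← log2, hlogm]; ring
    · have hg1 : 1 < γ.toReal := by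
        rw [← ENNReal.toReal_one]
        exact (ENNReal.toReal_lt_toReal ENNReal.one_ne_top ht).mpr hγ
      have hgne : γ.toReal ≠ 0 := by linarith
      rw [renyi, if_neg hγ0, if_neg hγ1, if_neg ht]
      have hsum : ∑ i : Fin (m+1), (if i = 0 then (0:ℝ) else 1/m) ^ γ.toReal
          = (m:ℝ) ^ (1 - γ.toReal) := by
        have h1 : ∀ i : Fin (m+1), (if i = 0 then (0:ℝ) else 1/m) ^ γ.toReal
            = if i = 0 then (0:ℝ) else ((m:ℝ) ^ γ.toReal)⁻¹ := by
          intro i; by_cases h : i = 0 <;>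
            simp [h, Real.zero_rpow hgne, one_div, Real.inv_rpow hmpos.le]
        rw [Finset.sum_congr rfl fun i _ => h1 i, sum_ite_fin]
        rw [← Real.rpow_neg hmpos.le, zero_add]
        nth_rewrite 1 [← Real.rpow_one (m:ℝ)]
        rw [← Real.rpow_add hmpos]
        ring_nf
      rw [hsum, log2, Real.logb_rpow_eq_mul_logb_of_pos hmpos, ← log2, hlogm]
      have : 1 - γ.toReal ≠ 0 := by linarith
      field_simp
  have hRmid : 2 * renyi γ (fun i : Fin (m+1) => if i = 0 then (1:ℝ)/2 else 1/(2*m)) < k := by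
    rcases eq_or_ne γ ⊤ with ht | ht
    · rw [renyi, if_neg hγ0, if_neg hγ1, if_pos ht,
        isup_ite_le m (1/2) (1/(2*m)) (by
          have h1 : (1:ℝ) ≤ (m:ℝ) := by exact_mod_cast Nat.one_le_iff_ne_zero.mpr (by omega)
          rw [div_le_div_iff₀ (by linarith) (by norm_num)]
          linarith)]
      rw [log2, one_div, Real.logb_inv, Real.logb_self_eq_one (by norm_num)]
      have : (3:ℝ) ≤ k := by exact_mod_cast hk3
      linarith
    · have hg1 : 1 < γ.toReal := by
        rw [← ENNReal.toReal_one]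
        exact (ENNReal.toReal_lt_toReal ENNReal.one_ne_top ht).mpr hγ
      have hgne : γ.toReal ≠ 0 := by linarith
      set g := γ.toReal with hgdef
      rw [renyi, if_neg hγ0, if_neg hγ1, if_neg ht]
      have hlow : (2:ℝ) ^ (-g) < ∑ i : Fin (m+1), (if i = 0 then (1:ℝ)/2 else 1/(2*m)) ^ g := by
        have h1 : ∀ i : Fin (m+1), (if i = 0 then (1:ℝ)/2 else 1/(2*m)) ^ g
            = if i = 0 then (2:ℝ)^(-g) else (1/(2*m))^g := by
          intro i; by_cases h : i = 0
          · rw [if_pos h, if_pos h, one_div, Real.inv_rpow (by norm_num),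
              ← Real.rpow_neg (by norm_num)]
          · rw [if_neg h, if_neg h]
        rw [Finset.sum_congr rfl fun i _ => h1 i, sum_ite_fin]
        have : (0:ℝ) < (m:ℝ) * (1/(2*(m:ℝ)))^g := by positivity
        linarith
      have hpos : (0:ℝ) < (2:ℝ) ^ (-g) := by positivity
      have hlog : -g < log2 (∑ i : Fin (m+1), (if i = 0 then (1:ℝ)/2 else 1/(2*m)) ^ g) := by
        have := Real.logb_lt_logb (b := 2) (by norm_num) hpos hlow
        rwa [Real.logb_rpow (by norm_num) (by norm_num)] at this
      have hneg : (1 - g)⁻¹ < 0 := inv_lt_zero.mpr (by linarith)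
      have : (1 - g)⁻¹ * log2 (∑ i : Fin (m+1), (if i = 0 then (1:ℝ)/2 else 1/(2*m)) ^ g)
          < (1 - g)⁻¹ * (-g) := by
        exact mul_lt_mul_of_neg_left hlog hneg
      have heq : (1 - g)⁻¹ * (-g) = g / (g - 1) := by
        have hne1 : (1:ℝ) - g ≠ 0 := by linarith
        have hne2 : g - 1 ≠ 0 := by linarith
        field_simp
        ring
      have hkge : 2 * g / (g - 1) ≤ (k:ℝ) := by
        calc 2 * g / (g - 1) ≤ (⌈2 * g / (g - 1)⌉₊ : ℝ) := Nat.le_ceil _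
        _ ≤ (k:ℝ) := by exact_mod_cast Nat.cast_le.mpr (le_max_right 3 _)
      have h2 : 2 * (g / (g-1)) = 2 * g / (g - 1) := by ring
      nlinarith [this, heq]
  -- put it together
  rw [hmid] at H
  simp only [smul_eq_mul] at H
  rw [hsa, hsb, hsmid] at H
  have hna2 : (fun i => a i / 2) = fun i : Fin (m+1) => if i = 0 then (1:ℝ) else 0 := by
    funext i; by_cases h : i = 0 <;> simp [hadef, h]
  have hnb2 : (fun i => b i / 2) = fun i : Fin (m+1) => if i = 0 then (0:ℝ) else 1/m := by
    funext i; by_cases h : i = 0 <;> simp [hbdef, h] <;> ring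
  have hnm : (fun i : Fin (m+1) => (if i = 0 then (1:ℝ) else 1/m) / 2)
      = fun i : Fin (m+1) => if i = 0 then (1:ℝ)/2 else 1/(2*m) := by
    funext i; by_cases h : i = 0 <;> simp [h] <;> ring
  rw [hna2, hnb2, hnm, hRa, hRb] at H
  linarith [hRmid]

/-- For `α ∈ (1,∞]` the function `x ↦ ‖x‖₁ · H_α(x/‖x‖₁)` fails to be
concave in some dimension; consequently it is concave in every dimension only if
`α ∈ [0,1]`. -/
theorem derivation_not_concave (α : ℝ≥0∞) (hα : 1 < α) :
    (∃ d : ℕ, ¬ ConcaveOn ℝ {x : Fin d → ℝ | (∀ i, 0 ≤ x i) ∧ x ≠ 0}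
      (fun x => (∑ i, x i) * renyi α (fun i => x i / ∑ j, x j))) ∧
    (∀ β : ℝ≥0∞,
      (∀ d : ℕ, ConcaveOn ℝ {x : Fin d → ℝ | (∀ i, 0 ≤ x i) ∧ x ≠ 0}
        (fun x => (∑ i, x i) * renyi β (fun i => x i / ∑ j, x j))) → β ≤ 1) := by
  refine ⟨key_not_concave α hα, fun β hb => ?_⟩
  by_contra hle
  push_neg at hle
  obtain ⟨d, hd⟩ := key_not_concave β hle
  exact hd (hb d)
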